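/- If the trajectory set S satisfies Leinert's condition at every node (i.e., σ̄(0) ≥ 0 holds for every shifted conditional space S^{(S,j)}), then S satisfies König's condition at every node (in particular (LOP) and (K) hold for S itself). -/

import Mathlib

open Filter
open scoped ENNReal

noncomputable section

/-- A simple portfolio: an initial endowment `V`, a maturity `n`, and
nonanticipating position functions `H i`. -/
structure SimplePortfolio where
  V : ℝ
  n : ℕ
  H : ℕ → (ℕ → ℝ) → ℝ
  nonanticipating : ∀ i, ∀ S S' : ℕ → ℝ, (∀ k, k ≤ i → S k = S' k) → H i S = H i S'

namespace SimplePortfolio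

/-- Wealth process at time `j`. -/
def wealthAt (P : SimplePortfolio) (j : ℕ) (S : ℕ → ℝ) : ℝ :=
  P.V + ∑ i ∈ Finset.range (min j P.n), P.H i S * (S (i + 1) - S i)

/-- Terminal wealth `Π_∞`. -/
def wealth (P : SimplePortfolio) (S : ℕ → ℝ) : ℝ :=
  P.V + ∑ i ∈ Finset.range P.n, P.H i S * (S (i + 1) - S i)

/-- A positive simple portfolio relative to the trajectory set `𝒮`. -/
def Positive (𝒮 : Set (ℕ → ℝ)) (P : SimplePortfolio) : Prop :=
  0 ≤ P.V ∧ ∀ S ∈ 𝒮, 0 ≤ P.wealth S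

end SimplePortfolio

/-- A generalized portfolio: a sequence of simple portfolios, positive for `m ≥ 1`. -/
def IsGenPortfolio (𝒮 : Set (ℕ → ℝ)) (P : ℕ → SimplePortfolio) : Prop :=
  ∀ m, 1 ≤ m → (P m).Positive 𝒮

/-- Total terminal wealth of a generalized portfolio, valued in `(-∞, +∞]`. -/
def totalWealth (P : ℕ → SimplePortfolio) (S : ℕ → ℝ) : EReal :=
  ((P 0).wealth S : EReal) + ((∑' m, ENNReal.ofReal ((P (m + 1)).wealth S) : ℝ≥0∞) : EReal)

/-- Total initial endowment of a generalized portfolio, valued in `(-∞, +∞]`. -/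
def totalEndow (P : ℕ → SimplePortfolio) : EReal :=
  ((P 0).V : EReal) + ((∑' m, ENNReal.ofReal ((P (m + 1)).V) : ℝ≥0∞) : EReal)

/-- The superhedging operator `σ̄` using generalized portfolios. -/
def sigmaBar (𝒮 : Set (ℕ → ℝ)) (f : (ℕ → ℝ) → EReal) : EReal :=
  sInf {c : EReal | ∃ P : ℕ → SimplePortfolio, IsGenPortfolio 𝒮 P ∧
    (∀ S ∈ 𝒮, f S ≤ totalWealth P S) ∧ c = totalEndow P}

/-- The superhedging operator `Ī` using positive generalized portfolios. -/
def IBar (𝒮 : Set (ℕ → ℝ)) (f : (ℕ → ℝ) → EReal) : EReal :=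
  sInf {c : EReal | ∃ P : ℕ → SimplePortfolio, (∀ m, (P m).Positive 𝒮) ∧
    (∀ S ∈ 𝒮, f S ≤ ((∑' m, ENNReal.ofReal ((P m).wealth S) : ℝ≥0∞) : EReal)) ∧
    c = ((∑' m, ENNReal.ofReal ((P m).V) : ℝ≥0∞) : EReal)}

/-- The trajectory-wise Law of One Price (LOP). -/
def LOP (𝒮 : Set (ℕ → ℝ)) : Prop :=
  ∀ P Q : SimplePortfolio, (∀ S ∈ 𝒮, P.wealth S = Q.wealth S) → P.V = Q.V

/-- Positivity of the elementary hedging functional `I`: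
any simple portfolio whose terminal wealth is nonnegative on `𝒮` (i.e. an element of `E⁺`)
has nonnegative initial endowment (price). -/
def IPos (𝒮 : Set (ℕ → ℝ)) : Prop :=
  ∀ P : SimplePortfolio, (∀ S ∈ 𝒮, 0 ≤ P.wealth S) → 0 ≤ P.V

/-- Leinert's condition (L): `σ̄(0) ≥ 0`. -/
def LeinertCond (𝒮 : Set (ℕ → ℝ)) : Prop := 0 ≤ sigmaBar 𝒮 (fun _ => 0)

/-- König's condition (K): `I(f) + Ī(f⁻) ≤ Ī(f⁺)` for all `f ∈ E`. -/
def KoenigCond (𝒮 : Set (ℕ → ℝ)) : Prop :=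
  ∀ P : SimplePortfolio,
    (P.V : EReal) + IBar 𝒮 (fun S => ((max (-(P.wealth S)) 0 : ℝ) : EReal))
      ≤ IBar 𝒮 (fun S => ((max (P.wealth S) 0 : ℝ) : EReal))

/-- The seminorm `‖f‖ = Ī(|f|)`. -/
def pnorm (𝒮 : Set (ℕ → ℝ)) (f : (ℕ → ℝ) → ℝ) : EReal :=
  IBar 𝒮 (fun S => ((|f S| : ℝ) : EReal))

/-- Null sets with respect to the seminorm `‖·‖`. -/
def NullSet (𝒮 : Set (ℕ → ℝ)) (A : Set (ℕ → ℝ)) : Prop :=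
  IBar 𝒮 (A.indicator fun _ => (1 : EReal)) = 0

/-- The shifted conditional space `𝒮^{(S,j)}`. -/
def shiftedSpace (𝒮 : Set (ℕ → ℝ)) (S : ℕ → ℝ) (j : ℕ) : Set (ℕ → ℝ) :=
  {T | ∃ S' ∈ 𝒮, (∀ i, i ≤ j → S' i = S i) ∧ ∀ i, T i = S' (j + i)}

/-- Leinert's condition at every node (nL). -/
def NodewiseL (𝒮 : Set (ℕ → ℝ)) : Prop :=
  ∀ S ∈ 𝒮, ∀ j : ℕ, LeinertCond (shiftedSpace 𝒮 S j)

/-- König's condition (together with (LOP)) at every node (nK). -/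
def NodewiseK (𝒮 : Set (ℕ → ℝ)) : Prop :=
  ∀ S ∈ 𝒮, ∀ j : ℕ, LOP (shiftedSpace 𝒮 S j) ∧ KoenigCond (shiftedSpace 𝒮 S j)

/-- `S'` agrees with `S` up to time `j`. -/
def agreesUpTo (S S' : ℕ → ℝ) (j : ℕ) : Prop := ∀ i, i ≤ j → S' i = S i

/-- The node `𝒮_{(S,j)}` is flat. -/
def FlatNode (𝒮 : Set (ℕ → ℝ)) (S : ℕ → ℝ) (j : ℕ) : Prop :=
  ∀ S' ∈ 𝒮, agreesUpTo S S' j → S' (j + 1) = S j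

/-- The node `𝒮_{(S,j)}` is an arbitrage node. -/
def ArbNode (𝒮 : Set (ℕ → ℝ)) (S : ℕ → ℝ) (j : ℕ) : Prop :=
  ∃ ε : ℝ, (ε = 1 ∨ ε = -1) ∧
    (∀ S' ∈ 𝒮, agreesUpTo S S' j → 0 ≤ ε * (S' (j + 1) - S j)) ∧
    ∃ S' ∈ 𝒮, agreesUpTo S S' j ∧ 0 < ε * (S' (j + 1) - S j)

/-- Arbitrage node of type I. -/
def TypeINode (𝒮 : Set (ℕ → ℝ)) (S : ℕ → ℝ) (j : ℕ) : Prop :=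
  ArbNode 𝒮 S j ∧ ∃ S' ∈ 𝒮, agreesUpTo S S' j ∧ S' (j + 1) = S j

/-- Arbitrage node of type II. -/
def TypeIINode (𝒮 : Set (ℕ → ℝ)) (S : ℕ → ℝ) (j : ℕ) : Prop :=
  ArbNode 𝒮 S j ∧ ¬ ∃ S' ∈ 𝒮, agreesUpTo S S' j ∧ S' (j + 1) = S j

/-- Up-down node: neither flat nor an arbitrage node. -/
def UpDownNode (𝒮 : Set (ℕ → ℝ)) (S : ℕ → ℝ) (j : ℕ) : Prop :=
  ¬ FlatNode 𝒮 S j ∧ ¬ ArbNode 𝒮 S j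

/-- The set `N` of trajectories moving at a type I arbitrage node. -/
def NSet (𝒮 : Set (ℕ → ℝ)) : Set (ℕ → ℝ) :=
  {S | S ∈ 𝒮 ∧ ∃ j : ℕ, TypeINode 𝒮 S j ∧ S (j + 1) ≠ S j}

/-- The set `N_n` of trajectories moving at a type I arbitrage node before time `n`. -/
def NSetUpTo (𝒮 : Set (ℕ → ℝ)) (n : ℕ) : Set (ℕ → ℝ) :=
  {S | S ∈ 𝒮 ∧ ∃ j < n, TypeINode 𝒮 S j ∧ S (j + 1) ≠ S j}

/-- Membership in `L¹_(L)`: `f` has finite norm and is a `‖·‖`-limit of elements of `E'`. -/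
def MemL1L (𝒮 : Set (ℕ → ℝ)) (f : (ℕ → ℝ) → ℝ) : Prop :=
  pnorm 𝒮 f < ⊤ ∧
  ∃ P : ℕ → SimplePortfolio, (∀ m, pnorm 𝒮 ((P m).wealth) < ⊤) ∧
    Tendsto (fun m => pnorm 𝒮 (fun S => f S - (P m).wealth S)) atTop (nhds 0)

/-- Membership in `L¹_(K)`: the outer and inner integrals agree and are finite. -/
def MemL1K (𝒮 : Set (ℕ → ℝ)) (f : (ℕ → ℝ) → ℝ) : Prop :=
  ∃ c : ℝ, sigmaBar 𝒮 (fun S => ((f S : ℝ) : EReal)) = (c : EReal) ∧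
    sigmaBar 𝒮 (fun S => ((-f S : ℝ) : EReal)) = ((-c : ℝ) : EReal)

/-- `f` has finite maturity: it depends only on an initial segment of the trajectory. -/
def FiniteMaturity (𝒮 : Set (ℕ → ℝ)) (f : (ℕ → ℝ) → ℝ) : Prop :=
  ∃ n : ℕ, ∀ S ∈ 𝒮, ∀ S' ∈ 𝒮, (∀ i, i ≤ n → S i = S' i) → f S = f S'

/- ============ Part A : infrastructure ============ -/

namespace SimplePortfolio

lemma wealthAt_zero (P : SimplePortfolio) (S : ℕ → ℝ) : P.wealthAt 0 S = P.V := by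
  simp [wealthAt]

lemma wealthAt_of_le (P : SimplePortfolio) {j : ℕ} (h : P.n ≤ j) (S : ℕ → ℝ) :
    P.wealthAt j S = P.wealth S := by
  simp [wealthAt, wealth, Nat.min_eq_right h]

lemma wealthAt_succ (P : SimplePortfolio) (j : ℕ) (S : ℕ → ℝ) :
    P.wealthAt (j+1) S
      = P.wealthAt j S + (if j < P.n then P.H j S * (S (j+1) - S j) else 0) := by
  rcases lt_or_ge j P.n with h | h
  · have h1 : min (j+1) P.n = (min j P.n) + 1 := by omega
    rw [wealthAt, wealthAt, h1, Finset.sum_range_succ]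
    have h2 : min j P.n = j := by omega
    rw [h2, if_pos h]; ring
  · have h1 : min (j+1) P.n = P.n := by omega
    have h2 : min j P.n = P.n := by omega
    rw [wealthAt, wealthAt, h1, h2, if_neg (by omega)]
    ring

lemma wealthAt_congr (P : SimplePortfolio) {j : ℕ} {S S' : ℕ → ℝ}
    (h : ∀ i ≤ j, S i = S' i) : P.wealthAt j S = P.wealthAt j S' := by
  unfold wealthAt
  congr 1
  apply Finset.sum_congr rfl
  intro i hi
  have hij : i < j := by
    have := Finset.mem_range.mp hi; omega
  rw [P.nonanticipating i S S' (fun k hk => h k (by omega)),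
    h i (by omega), h (i+1) (by omega)]

lemma wealth_congr (P : SimplePortfolio) {S S' : ℕ → ℝ}
    (h : ∀ i ≤ P.n, S i = S' i) : P.wealth S = P.wealth S' := by
  have := P.wealthAt_congr (j := P.n) h
  rwa [P.wealthAt_of_le le_rfl, P.wealthAt_of_le le_rfl] at this

end SimplePortfolio

/-- Constant (pure cash) portfolio. -/
def constPort (c : ℝ) : SimplePortfolio :=
  ⟨c, 0, fun _ _ => 0, fun _ _ _ _ => rfl⟩

@[simp] lemma constPort_wealth (c : ℝ) (S : ℕ → ℝ) : (constPort c).wealth S = c := by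
  simp [constPort, SimplePortfolio.wealth]

@[simp] lemma constPort_V (c : ℝ) : (constPort c).V = c := rfl

/-- Negation of a portfolio. -/
def negPort (P : SimplePortfolio) : SimplePortfolio :=
  ⟨-P.V, P.n, fun i S => -(P.H i S), fun i S S' h => by
    simp [P.nonanticipating i S S' h]⟩

@[simp] lemma negPort_wealth (P : SimplePortfolio) (S : ℕ → ℝ) :
    (negPort P).wealth S = -(P.wealth S) := by
  simp [negPort, SimplePortfolio.wealth, neg_add, ← Finset.sum_neg_distrib]; ring

@[simp] lemma negPort_wealthAt (P : SimplePortfolio) (j : ℕ) (S : ℕ → ℝ) :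
    (negPort P).wealthAt j S = -(P.wealthAt j S) := by
  simp [negPort, SimplePortfolio.wealthAt, neg_add, ← Finset.sum_neg_distrib]; ring

/-- splice of a prefix of `S` (up to time `j`) with `T` shifted. -/
def splice (S : ℕ → ℝ) (j : ℕ) (T : ℕ → ℝ) : ℕ → ℝ :=
  fun k => if k ≤ j then S k else T (k - j)

/-- shift of a trajectory. -/
def shiftT (S : ℕ → ℝ) (j : ℕ) : ℕ → ℝ := fun i => S (j + i)

lemma shiftT_mem {𝒯 : Set (ℕ → ℝ)} {S : ℕ → ℝ} (hS : S ∈ 𝒯) (j : ℕ) :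
    shiftT S j ∈ shiftedSpace 𝒯 S j :=
  ⟨S, hS, fun _ _ => rfl, fun _ => rfl⟩

lemma shiftedSpace_nonempty {𝒯 : Set (ℕ → ℝ)} {S : ℕ → ℝ} (hS : S ∈ 𝒯) (j : ℕ) :
    (shiftedSpace 𝒯 S j).Nonempty := ⟨shiftT S j, shiftT_mem hS j⟩

lemma splice_eq {S ext : ℕ → ℝ} {j : ℕ} (hpre : ∀ i ≤ j, ext i = S i)
    {T : ℕ → ℝ} (hT : ∀ i, T i = ext (j + i)) : splice S j T = ext := by
  funext k
  unfold splice
  by_cases hk : k ≤ j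
  · rw [if_pos hk, hpre k hk]
  · rw [if_neg hk, hT (k - j)]
    congr 1
    omega

/-- Conditional portfolio at node `(S, j)`, viewed on the shifted space. -/
def condPort (P : SimplePortfolio) (S : ℕ → ℝ) (j : ℕ) : SimplePortfolio where
  V := P.wealthAt j S
  n := P.n
  H := fun i T => if j + i < P.n then P.H (j + i) (splice S j T) else 0
  nonanticipating := by
    intro i T T' h
    by_cases hin : j + i < P.n
    · rw [if_pos hin, if_pos hin]
      refine P.nonanticipating (j+i) _ _ ?_
      intro k hk
      unfold splice
      by_cases hkj : k ≤ j
      · simp [hkj]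
      · rw [if_neg hkj, if_neg hkj, h (k - j) (by omega)]
    · rw [if_neg hin, if_neg hin]

@[simp] lemma condPort_V (P : SimplePortfolio) (S : ℕ → ℝ) (j : ℕ) :
    (condPort P S j).V = P.wealthAt j S := rfl

lemma condPort_wealth (P : SimplePortfolio) {S ext : ℕ → ℝ} {j : ℕ}
    (hpre : ∀ i ≤ j, ext i = S i) {T : ℕ → ℝ} (hT : ∀ i, T i = ext (j + i)) :
    (condPort P S j).wealth T = P.wealth ext := by
  have hsp : splice S j T = ext := splice_eq hpre hT
  have hAt : P.wealthAt j S = P.wealthAt j ext :=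
    P.wealthAt_congr (fun i hi => (hpre i hi).symm)
  have hLHS : (condPort P S j).wealth T = P.wealthAt j ext
      + ∑ i ∈ Finset.range P.n,
          (if j + i < P.n then P.H (j+i) ext else 0) * (T (i+1) - T i) := by
    rw [SimplePortfolio.wealth]
    simp only [condPort, hsp, hAt]
  rw [hLHS]
  rcases le_or_gt P.n j with h | h
  · have hz : ∀ i ∈ Finset.range P.n,
        (if j + i < P.n then P.H (j+i) ext else 0) * (T (i+1) - T i) = 0 := by
      intro i _
      rw [if_neg (by omega), zero_mul]
    rw [Finset.sum_congr rfl hz, Finset.sum_const_zero, add_zero,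
      P.wealthAt_of_le h ext]
  · -- j < n
    have hwe : P.wealth ext = P.wealthAt j ext
        + ∑ i ∈ Finset.range (P.n - j), P.H (j + i) ext * (ext (j + i + 1) - ext (j + i)) := by
      rw [SimplePortfolio.wealth, SimplePortfolio.wealthAt, Nat.min_eq_left h.le, add_assoc]
      congr 1
      rw [show Finset.range P.n = Finset.range (j + (P.n - j)) by congr 1; omega,
        Finset.sum_range_add]
    rw [hwe]
    have hsplit : ∑ i ∈ Finset.range P.n,
        (if j + i < P.n then P.H (j+i) ext else 0) * (T (i+1) - T i)
        = ∑ i ∈ Finset.range (P.n - j),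
        (if j + i < P.n then P.H (j+i) ext else 0) * (T (i+1) - T i) := by
      symm
      apply Finset.sum_subset
      · intro x hx
        simp only [Finset.mem_range] at *
        omega
      · intro x _ hx
        simp only [Finset.mem_range] at hx
        rw [if_neg (by omega), zero_mul]
    rw [hsplit]
    have hterm : ∀ i ∈ Finset.range (P.n - j),
        (if j + i < P.n then P.H (j+i) ext else 0) * (T (i+1) - T i)
        = P.H (j + i) ext * (ext (j + i + 1) - ext (j + i)) := by
      intro i hi
      have hi' : i < P.n - j := Finset.mem_range.mp hi
      rw [if_pos (by omega), hT i, hT (i+1), ← Nat.add_assoc]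
    rw [Finset.sum_congr rfl hterm]

/-- zero portfolio -/
def zeroPort : SimplePortfolio := constPort 0

lemma zeroPort_positive (𝒯 : Set (ℕ → ℝ)) : zeroPort.Positive 𝒯 :=
  ⟨le_refl 0, fun S _ => by simp [zeroPort]⟩
/- ============ Part B : consequences of nodewise Leinert ============ -/

lemma leinert_le_endow {𝒯' : Set (ℕ → ℝ)} (hLc : LeinertCond 𝒯')
    {Q : ℕ → SimplePortfolio} (hgen : IsGenPortfolio 𝒯' Q)
    (hw : ∀ S ∈ 𝒯', (0:EReal) ≤ totalWealth Q S) : (0:EReal) ≤ totalEndow Q :=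
  le_trans hLc (sInf_le ⟨Q, hgen, hw, rfl⟩)

lemma coe_ennreal_eq_coe_toReal {b : ℝ≥0∞} (hb : b ≠ ⊤) :
    (b : EReal) = ((b.toReal : ℝ) : EReal) := by
  have h1 : (b : EReal) ≠ ⊤ := by simp [EReal.coe_ennreal_eq_top_iff, hb]
  have := EReal.coe_toReal h1 (EReal.coe_ennreal_ne_bot b)
  rw [EReal.toReal_coe_ennreal] at this
  exact this.symm

lemma le_coe_of_nonneg_add {x : ℝ} {b : ℝ≥0∞}
    (h : (0:EReal) ≤ ((-x : ℝ):EReal) + (b:EReal)) : ((x:ℝ):EReal) ≤ (b:EReal) := by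
  rcases eq_or_ne b ⊤ with hb | hb
  · simp [hb]
  · rw [coe_ennreal_eq_coe_toReal hb] at h ⊢
    rw [← EReal.coe_add] at h
    rw [EReal.coe_le_coe_iff]
    have := EReal.coe_nonneg.mpr (le_refl (0:ℝ))
    have h' : (0:ℝ) ≤ -x + b.toReal := by exact_mod_cast h
    linarith

lemma nonneg_add_coe_of_le {x : ℝ} {b : ℝ≥0∞}
    (h : ((x:ℝ):EReal) ≤ (b:EReal)) : (0:EReal) ≤ ((-x : ℝ):EReal) + (b:EReal) := by
  rcases eq_or_ne b ⊤ with hb | hb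
  · rw [hb, EReal.coe_ennreal_top, EReal.add_top_of_ne_bot (EReal.coe_ne_bot _)]
    exact le_top
  · rw [coe_ennreal_eq_coe_toReal hb] at h ⊢
    rw [← EReal.coe_add]
    have h' : (x:ℝ) ≤ b.toReal := by exact_mod_cast h
    have : (0:ℝ) ≤ -x + b.toReal := by linarith
    exact_mod_cast this

lemma tsum_ofReal_zero_wealth (T : ℕ → ℝ) :
    (∑' _ : ℕ, ENNReal.ofReal (zeroPort.wealth T)) = 0 := by
  simp [zeroPort]

section Pack

variable {𝒯 : Set (ℕ → ℝ)}


def PackL (𝒯 : Set (ℕ → ℝ)) : Prop := ∀ S ∈ 𝒯, ∀ j, LeinertCond (shiftedSpace 𝒯 S j)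

/-- Lemma W : value process of a nonnegative-wealth portfolio is nonneg at all nodes. -/
lemma pack_wealthAt_nonneg (hL : PackL 𝒯) {h : SimplePortfolio} (hpos : ∀ S ∈ 𝒯, 0 ≤ h.wealth S)
    {S : ℕ → ℝ} (hS : S ∈ 𝒯) (j : ℕ) : 0 ≤ h.wealthAt j S := by
  classical
  set Q : ℕ → SimplePortfolio := fun m => if m = 0 then condPort h S j else zeroPort with hQ
  have hQ0 : Q 0 = condPort h S j := by simp [hQ]
  have hQs : ∀ m, Q (m+1) = zeroPort := by intro m; simp [hQ]
  have hgen : IsGenPortfolio (shiftedSpace 𝒯 S j) Q := by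
    intro m hm
    have : m ≠ 0 := by omega
    simp only [hQ, if_neg this]
    exact zeroPort_positive _
  have hend := leinert_le_endow (hL S hS j) hgen ?_
  · rw [totalEndow] at hend
    simp only [hQ0, condPort_V] at hend
    have hz : (∑' m, ENNReal.ofReal ((Q (m+1)).V)) = 0 := by
      simp [hQs, zeroPort, constPort]
    rw [hz] at hend
    simp only [EReal.coe_ennreal_zero, add_zero] at hend
    exact_mod_cast hend
  · intro T hT
    obtain ⟨ext, hext, hpre, hTi⟩ := hT
    rw [totalWealth]
    have hz : (∑' m, ENNReal.ofReal ((Q (m+1)).wealth T)) = 0 := by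
      simp [hQs, zeroPort, constPort, SimplePortfolio.wealth]
    rw [hz, hQ0]
    simp only [EReal.coe_ennreal_zero, add_zero]
    rw [condPort_wealth h hpre hTi]
    exact_mod_cast hpos ext hext

/-- Lemma STAR : conditional superhedging value bound at all nodes. -/
lemma pack_star (hL : PackL 𝒯) {h : ℕ → SimplePortfolio} (hpos : ∀ m, (h m).Positive 𝒯)
    {g : SimplePortfolio}
    (hdom : ∀ S ∈ 𝒯, ((g.wealth S : ℝ):EReal)
      ≤ ((∑' m, ENNReal.ofReal ((h m).wealth S) : ℝ≥0∞) : EReal))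
    {S : ℕ → ℝ} (hS : S ∈ 𝒯) (j : ℕ) :
    ((g.wealthAt j S : ℝ):EReal)
      ≤ ((∑' m, ENNReal.ofReal ((h m).wealthAt j S) : ℝ≥0∞):EReal) := by
  classical
  set Q : ℕ → SimplePortfolio := fun m =>
    if m = 0 then condPort (negPort g) S j else condPort (h (m-1)) S j with hQ
  have hQ0 : Q 0 = condPort (negPort g) S j := by simp [hQ]
  have hQs : ∀ m, Q (m+1) = condPort (h m) S j := by intro m; simp [hQ]
  have hgen : IsGenPortfolio (shiftedSpace 𝒯 S j) Q := by
    intro m hm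
    obtain ⟨m', rfl⟩ : ∃ m', m = m' + 1 := ⟨m - 1, by omega⟩
    rw [hQs m']
    constructor
    · rw [condPort_V]
      exact pack_wealthAt_nonneg hL (fun S' hS' => (hpos m').2 S' hS') hS j
    · intro T hT
      obtain ⟨ext, hext, hpre, hTi⟩ := hT
      rw [condPort_wealth _ hpre hTi]
      exact (hpos m').2 ext hext
  have hend := leinert_le_endow (hL S hS j) hgen ?_
  · rw [totalEndow] at hend
    simp only [hQ0, hQs, condPort_V, negPort_wealthAt] at hend
    exact le_coe_of_nonneg_add hend
  · intro T hT
    obtain ⟨ext, hext, hpre, hTi⟩ := hT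
    rw [totalWealth]
    simp only [hQ0, hQs]
    rw [condPort_wealth _ hpre hTi, negPort_wealth]
    have hco : ∀ m, ENNReal.ofReal ((condPort (h m) S j).wealth T)
        = ENNReal.ofReal ((h m).wealth ext) := by
      intro m; rw [condPort_wealth _ hpre hTi]
    rw [tsum_congr hco]
    exact nonneg_add_coe_of_le (hdom ext hext)

/-- positivity of prices: `IPos`. -/
lemma pack_ipos (hL : PackL 𝒯) {R : SimplePortfolio} (hpos : ∀ S ∈ 𝒯, 0 ≤ R.wealth S)
    (hne : 𝒯.Nonempty) : 0 ≤ R.V := by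
  obtain ⟨S, hS⟩ := hne
  have := pack_wealthAt_nonneg hL hpos hS 0
  rwa [R.wealthAt_zero] at this

end Pack
/- ============ Part D : LOP, composition, glue ============ -/

/-- padded-position sum identity -/
lemma sum_pad (P : SimplePortfolio) {K : ℕ} (hK : P.n ≤ K) (S : ℕ → ℝ) :
    ∑ i ∈ Finset.range K, (if i < P.n then P.H i S else 0) * (S (i+1) - S i)
      = P.wealth S - P.V := by
  rw [SimplePortfolio.wealth]
  have : ∑ i ∈ Finset.range K, (if i < P.n then P.H i S else 0) * (S (i+1) - S i)
      = ∑ i ∈ Finset.range P.n, (if i < P.n then P.H i S else 0) * (S (i+1) - S i) := by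
    symm
    apply Finset.sum_subset
    · intro x hx; simp only [Finset.mem_range] at *; omega
    · intro x _ hx; simp only [Finset.mem_range] at hx; rw [if_neg hx, zero_mul]
  rw [this]
  have : ∀ i ∈ Finset.range P.n, (if i < P.n then P.H i S else 0) * (S (i+1) - S i)
      = P.H i S * (S (i+1) - S i) := by
    intro i hi; rw [if_pos (Finset.mem_range.mp hi)]
  rw [Finset.sum_congr rfl this]
  ring

/-- difference of two simple portfolios. -/
def subPort (P Q : SimplePortfolio) : SimplePortfolio where
  V := P.V - Q.V
  n := max P.n Q.n
  H := fun i S => (if i < P.n then P.H i S else 0) - (if i < Q.n then Q.H i S else 0)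
  nonanticipating := by
    intro i S S' h
    rw [show (if i < P.n then P.H i S else 0) = (if i < P.n then P.H i S' else 0) by
        split <;> simp [P.nonanticipating i S S' h],
      show (if i < Q.n then Q.H i S else 0) = (if i < Q.n then Q.H i S' else 0) by
        split <;> simp [Q.nonanticipating i S S' h]]

lemma subPort_wealth (P Q : SimplePortfolio) (S : ℕ → ℝ) :
    (subPort P Q).wealth S = P.wealth S - Q.wealth S := by
  rw [SimplePortfolio.wealth]
  have : ∑ i ∈ Finset.range (subPort P Q).n,
      (subPort P Q).H i S * (S (i+1) - S i)
      = ∑ i ∈ Finset.range (max P.n Q.n),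
        ((if i < P.n then P.H i S else 0) * (S (i+1) - S i)
          - (if i < Q.n then Q.H i S else 0) * (S (i+1) - S i)) := by
    apply Finset.sum_congr rfl
    intro i _
    show ((if i < P.n then P.H i S else 0) - (if i < Q.n then Q.H i S else 0)) * _ = _
    ring
  rw [show (subPort P Q).V = P.V - Q.V from rfl] at *
  rw [this, Finset.sum_sub_distrib,
    sum_pad P (le_max_left _ _) S, sum_pad Q (le_max_right _ _) S]
  ring

lemma pack_lop {𝒯 : Set (ℕ → ℝ)} (hL : PackL 𝒯) (hne : 𝒯.Nonempty) : LOP 𝒯 := by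
  intro P Q heq
  have h1 : 0 ≤ (subPort P Q).V := by
    apply pack_ipos hL _ hne
    intro S hS
    rw [subPort_wealth, heq S hS]
    simp
  have h2 : 0 ≤ (subPort Q P).V := by
    apply pack_ipos hL _ hne
    intro S hS
    rw [subPort_wealth, heq S hS]
    simp
  have e1 : (subPort P Q).V = P.V - Q.V := rfl
  have e2 : (subPort Q P).V = Q.V - P.V := rfl
  rw [e1] at h1; rw [e2] at h2
  linarith

/-- composition of shifted spaces. -/
lemma shiftedSpace_comp {𝒮 : Set (ℕ → ℝ)} {S₀ : ℕ → ℝ} {j₀ : ℕ}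
    {S : ℕ → ℝ} {E : ℕ → ℝ} (hE : E ∈ 𝒮) (hpreE : ∀ i ≤ j₀, E i = S₀ i)
    (hSi : ∀ i, S i = E (j₀ + i)) (j : ℕ) :
    shiftedSpace (shiftedSpace 𝒮 S₀ j₀) S j = shiftedSpace 𝒮 E (j₀ + j) := by
  ext T
  constructor
  · rintro ⟨ext, ⟨E', hE', hpreE', hexti⟩, hpre, hT⟩
    refine ⟨E', hE', ?_, ?_⟩
    · intro i hi
      rcases le_or_gt i j₀ with h | h
      · rw [hpreE' i h, hpreE i h]
      · obtain ⟨k, rfl⟩ : ∃ k, i = j₀ + k := ⟨i - j₀, by omega⟩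
        have hk : k ≤ j := by omega
        rw [← hexti k, hpre k hk, hSi k]
    · intro i
      rw [hT i, hexti (j + i)]
      congr 1
      omega
  · rintro ⟨E'', hE'', hpre'', hT⟩
    refine ⟨shiftT E'' j₀, ⟨E'', hE'', ?_, fun _ => rfl⟩, ?_, ?_⟩
    · intro i hi
      rw [hpre'' i (by omega), hpreE i hi]
    · intro i hi
      show E'' (j₀ + i) = S i
      rw [hpre'' (j₀ + i) (by omega), ← hSi i]
    · intro i
      rw [hT i]
      show E'' (j₀ + j + i) = E'' (j₀ + (j + i))
      congr 1
      omega

lemma shiftedSpace_zero_self {𝒮 : Set (ℕ → ℝ)} {s0 : ℝ} (h0 : ∀ S ∈ 𝒮, S 0 = s0)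
    {S : ℕ → ℝ} (hS : S ∈ 𝒮) : shiftedSpace 𝒮 S 0 = 𝒮 := by
  ext T
  constructor
  · rintro ⟨S', hS', _, hT⟩
    have : T = S' := by
      funext i
      rw [hT i, Nat.zero_add]
    rwa [this]
  · intro hT
    refine ⟨T, hT, ?_, ?_⟩
    · intro i hi
      interval_cases i
      rw [h0 T hT, h0 S hS]
    · intro i
      rw [Nat.zero_add]

lemma pack_of_nodewise {𝒮 : Set (ℕ → ℝ)} (hnL : NodewiseL 𝒮)
    {S : ℕ → ℝ} (hS : S ∈ 𝒮) (j : ℕ) : PackL (shiftedSpace 𝒮 S j) := by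
  intro S' hS' j'
  obtain ⟨E, hE, hpreE, hSi⟩ := hS'
  rw [shiftedSpace_comp hE hpreE hSi j']
  exact hnL E hE (j + j')
/- ============ Part C1 : the special hedge portfolio ============ -/
open scoped Classical
/-- stopped position of `h m` at time `j`. -/
noncomputable def bp (h : ℕ → SimplePortfolio) (m j : ℕ) (S : ℕ → ℝ) : ℝ :=
  if j < (h m).n then (h m).H j S else 0

/-- value of `h m` at time `j`. -/
noncomputable def wv (h : ℕ → SimplePortfolio) (m j : ℕ) (S : ℕ → ℝ) : ℝ :=
  (h m).wealthAt j S

/-- stopped position of `P` at time `j`. -/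
noncomputable def af (P : SimplePortfolio) (j : ℕ) (S : ℕ → ℝ) : ℝ :=
  if j < P.n then P.H j S else 0

/-- direction of the moves at a (possibly) one-sided node. -/
noncomputable def dirn (𝒯 : Set (ℕ → ℝ)) (j : ℕ) (S : ℕ → ℝ) : ℝ :=
  if (∀ ext ∈ 𝒯, (∀ i ≤ j, ext i = S i) → S j ≤ ext (j+1)) then 1 else -1

/-- head cut-off at a node. -/
noncomputable def Mnd (h : ℕ → SimplePortfolio) (ε : ℝ) (j : ℕ) (S : ℕ → ℝ) : ℕ :=
  if hx : ∃ M : ℕ, (∑' m, wv h m j S) - ∑ m ∈ Finset.range M, wv h m j S ≤ ε/4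
    then Classical.choose hx else 0

noncomputable def headB (h : ℕ → SimplePortfolio) (ε : ℝ) (j : ℕ) (S : ℕ → ℝ) : ℝ :=
  ∑ m ∈ Finset.range (Mnd h ε j S), bp h m j S

noncomputable def kap (𝒯 : Set (ℕ → ℝ)) (P : SimplePortfolio) (h : ℕ → SimplePortfolio)
    (ε : ℝ) (j : ℕ) (S : ℕ → ℝ) : ℝ :=
  max ((af P j S - headB h ε j S) * dirn 𝒯 j S) 0

noncomputable def posB (𝒯 : Set (ℕ → ℝ)) (P : SimplePortfolio) (h : ℕ → SimplePortfolio)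
    (ε : ℝ) (j : ℕ) (S : ℕ → ℝ) : ℝ :=
  headB h ε j S + kap 𝒯 P h ε j S * dirn 𝒯 j S - af P j S

noncomputable def posA (P : SimplePortfolio) (h : ℕ → SimplePortfolio)
    (j : ℕ) (S : ℕ → ℝ) : ℝ :=
  (∑' m, bp h m j S) - af P j S

/-- still alive at time `j` (no one-sided-node jump strictly before `j`). -/
def alive (h : ℕ → SimplePortfolio) (j : ℕ) (S : ℕ → ℝ) : Prop :=
  ∀ i < j, Summable (fun m => bp h m i S) ∨ S (i+1) = S i

lemma alive_zero (h : ℕ → SimplePortfolio) (S : ℕ → ℝ) : alive h 0 S := by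
  intro i hi; omega

lemma alive_mono (h : ℕ → SimplePortfolio) {j j' : ℕ} (hle : j ≤ j') {S : ℕ → ℝ}
    (ha : alive h j' S) : alive h j S := fun i hi => ha i (by omega)

/- congruence lemmas -/
section congr
variable {S S' : ℕ → ℝ} {j : ℕ}

lemma bp_congr (h : ℕ → SimplePortfolio) (m : ℕ) (hp : ∀ k ≤ j, S k = S' k) :
    bp h m j S = bp h m j S' := by
  unfold bp
  split
  · exact (h m).nonanticipating j S S' hp
  · rfl

lemma bpf_congr (h : ℕ → SimplePortfolio) (hp : ∀ k ≤ j, S k = S' k) :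
    (fun m => bp h m j S) = (fun m => bp h m j S') := by
  funext m; exact bp_congr h m hp

lemma wvf_congr (h : ℕ → SimplePortfolio) (hp : ∀ k ≤ j, S k = S' k) :
    (fun m => wv h m j S) = (fun m => wv h m j S') := by
  funext m; exact (h m).wealthAt_congr hp

lemma af_congr (P : SimplePortfolio) (hp : ∀ k ≤ j, S k = S' k) :
    af P j S = af P j S' := by
  unfold af
  split
  · exact P.nonanticipating j S S' hp
  · rfl

lemma dirn_congr (𝒯 : Set (ℕ → ℝ)) (hp : ∀ k ≤ j, S k = S' k) :
    dirn 𝒯 j S = dirn 𝒯 j S' := by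
  unfold dirn
  have : (∀ ext ∈ 𝒯, (∀ i ≤ j, ext i = S i) → S j ≤ ext (j+1))
      ↔ (∀ ext ∈ 𝒯, (∀ i ≤ j, ext i = S' i) → S' j ≤ ext (j+1)) := by
    constructor
    · intro hall ext hext hpre
      rw [← hp j le_rfl]
      exact hall ext hext (fun i hi => (hpre i hi).trans (hp i hi).symm)
    · intro hall ext hext hpre
      rw [hp j le_rfl]
      exact hall ext hext (fun i hi => (hpre i hi).trans (hp i hi))
  rw [if_congr this rfl rfl]

lemma Mnd_congr (h : ℕ → SimplePortfolio) (ε : ℝ) (hp : ∀ k ≤ j, S k = S' k) :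
    Mnd h ε j S = Mnd h ε j S' := by
  unfold Mnd
  rw [wvf_congr h hp]

lemma headB_congr (h : ℕ → SimplePortfolio) (ε : ℝ) (hp : ∀ k ≤ j, S k = S' k) :
    headB h ε j S = headB h ε j S' := by
  unfold headB
  rw [Mnd_congr h ε hp]
  exact Finset.sum_congr rfl (fun m _ => bp_congr h m hp)

lemma posB_congr (𝒯 : Set (ℕ → ℝ)) (P : SimplePortfolio) (h : ℕ → SimplePortfolio)
    (ε : ℝ) (hp : ∀ k ≤ j, S k = S' k) :
    posB 𝒯 P h ε j S = posB 𝒯 P h ε j S' := by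
  unfold posB kap
  rw [headB_congr h ε hp, dirn_congr 𝒯 hp, af_congr P hp]

lemma posA_congr (P : SimplePortfolio) (h : ℕ → SimplePortfolio)
    (hp : ∀ k ≤ j, S k = S' k) :
    posA P h j S = posA P h j S' := by
  unfold posA
  rw [bpf_congr h hp, af_congr P hp]

lemma alive_congr (h : ℕ → SimplePortfolio) (hp : ∀ k ≤ j, S k = S' k) :
    alive h j S ↔ alive h j S' := by
  unfold alive
  apply forall_congr'
  intro i
  apply imp_congr_right
  intro hi
  rw [bpf_congr h (fun k hk => hp k (by omega)), hp (i+1) (by omega), hp i (by omega)]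

end congr

/-- The special hedging portfolio. -/
noncomputable def Esp (𝒯 : Set (ℕ → ℝ)) (P : SimplePortfolio) (h : ℕ → SimplePortfolio)
    (ε : ℝ) (V0 : ℝ) : SimplePortfolio where
  V := V0
  n := P.n
  H := fun j S =>
    if alive h j S then
      (if Summable (fun m => bp h m j S) then posA P h j S else posB 𝒯 P h ε j S)
    else 0
  nonanticipating := by
    intro j S S' hp
    rw [if_congr (alive_congr h hp) rfl rfl]
    rw [if_congr (iff_of_eq (congrArg Summable (bpf_congr h hp))) (posA_congr P h hp)
      (posB_congr 𝒯 P h ε hp)]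

@[simp] lemma Esp_V (𝒯 : Set (ℕ → ℝ)) (P : SimplePortfolio) (h : ℕ → SimplePortfolio)
    (ε V0 : ℝ) : (Esp 𝒯 P h ε V0).V = V0 := rfl

@[simp] lemma Esp_n (𝒯 : Set (ℕ → ℝ)) (P : SimplePortfolio) (h : ℕ → SimplePortfolio)
    (ε V0 : ℝ) : (Esp 𝒯 P h ε V0).n = P.n := rfl

/-- free pieces at one-sided nodes. -/
noncomputable def FPport (𝒯 : Set (ℕ → ℝ)) (h : ℕ → SimplePortfolio) (i k : ℕ) :
    SimplePortfolio where
  V := 0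
  n := i + 1
  H := fun j T =>
    if j = i ∧ ¬ Summable (fun m => bp h m i T) ∧ Summable (fun m => wv h m i T)
      then (k+1 : ℝ) * dirn 𝒯 i T else 0
  nonanticipating := by
    intro j T T' hp
    by_cases hji : j = i
    · subst hji
      rw [if_congr (iff_of_eq (by rw [bpf_congr h hp, wvf_congr h hp]))
        (by rw [dirn_congr 𝒯 hp]) rfl]
    · rw [if_neg (by tauto), if_neg (by tauto)]

lemma FPport_wealth (𝒯 : Set (ℕ → ℝ)) (h : ℕ → SimplePortfolio) (i k : ℕ) (T : ℕ → ℝ) :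
    (FPport 𝒯 h i k).wealth T
      = (if ¬ Summable (fun m => bp h m i T) ∧ Summable (fun m => wv h m i T)
          then (k+1 : ℝ) * dirn 𝒯 i T else 0) * (T (i+1) - T i) := by
  rw [SimplePortfolio.wealth]
  show (0:ℝ) + _ = _
  rw [zero_add, show (FPport 𝒯 h i k).n = i + 1 from rfl, Finset.sum_range_succ]
  have hz : ∀ j ∈ Finset.range i, (FPport 𝒯 h i k).H j T * (T (j+1) - T j) = 0 := by
    intro j hj
    have : j ≠ i := by have := Finset.mem_range.mp hj; omega
    show (if _ ∧ _ then _ else 0) * _ = 0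
    rw [if_neg (by tauto), zero_mul]
  rw [Finset.sum_congr rfl hz, Finset.sum_const_zero, zero_add]
  congr 1
  show (if _ ∧ _ ∧ _ then _ else 0) = _
  by_cases hc : ¬ Summable (fun m => bp h m i T) ∧ Summable (fun m => wv h m i T)
  · rw [if_pos ⟨rfl, hc⟩, if_pos hc]
  · rw [if_neg (by tauto), if_neg hc]
/- ============ Part C2 : analytic lemmas ============ -/

lemma wv_succ (h : ℕ → SimplePortfolio) (m j : ℕ) (S : ℕ → ℝ) :
    wv h m (j+1) S = wv h m j S + bp h m j S * (S (j+1) - S j) := by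
  rw [wv, wv, (h m).wealthAt_succ, bp]
  split
  · rfl
  · rw [zero_mul]

lemma Fv_succ (P : SimplePortfolio) (j : ℕ) (S : ℕ → ℝ) :
    P.wealthAt (j+1) S = P.wealthAt j S + af P j S * (S (j+1) - S j) := by
  rw [P.wealthAt_succ, af]
  split
  · rfl
  · rw [zero_mul]

lemma summable_of_tsum_ofReal_ne_top {g : ℕ → ℝ} (hg : ∀ m, 0 ≤ g m)
    (h : (∑' m, ENNReal.ofReal (g m)) ≠ ⊤) : Summable g := by
  have h2 := ENNReal.summable_toReal h
  have : (fun m => (ENNReal.ofReal (g m)).toReal) = g := by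
    funext m; exact ENNReal.toReal_ofReal (hg m)
  rwa [this] at h2

lemma tsum_ofReal_eq {g : ℕ → ℝ} (hg : ∀ m, 0 ≤ g m) (hs : Summable g) :
    (∑' m, ENNReal.ofReal (g m)) = ENNReal.ofReal (∑' m, g m) :=
  (ENNReal.ofReal_tsum_of_nonneg hg hs).symm

lemma real_le_of_le_coe_tsum {x : ℝ} {g : ℕ → ℝ} (hg : ∀ m, 0 ≤ g m) (hs : Summable g)
    (h : ((x:ℝ):EReal) ≤ ((∑' m, ENNReal.ofReal (g m) : ℝ≥0∞):EReal)) :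
    x ≤ ∑' m, g m := by
  rw [tsum_ofReal_eq hg hs, EReal.coe_ennreal_ofReal,
    max_eq_left (tsum_nonneg hg)] at h
  exact_mod_cast h

lemma coe_le_coe_tsum_of_le_tsum {x : ℝ} {g : ℕ → ℝ} (hg : ∀ m, 0 ≤ g m) (hs : Summable g)
    (h : x ≤ ∑' m, g m) :
    ((x:ℝ):EReal) ≤ ((∑' m, ENNReal.ofReal (g m) : ℝ≥0∞):EReal) := by
  rw [tsum_ofReal_eq hg hs, EReal.coe_ennreal_ofReal,
    max_eq_left (tsum_nonneg hg)]
  exact_mod_cast h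

section CoreCtx

variable {𝒯 : Set (ℕ → ℝ)} {P : SimplePortfolio} {h : ℕ → SimplePortfolio}

/-- W lemma in `wv` form. -/
lemma wv_nonneg (hL : PackL 𝒯) (hpos : ∀ m, (h m).Positive 𝒯)
    {S : ℕ → ℝ} (hS : S ∈ 𝒯) (m j : ℕ) : 0 ≤ wv h m j S :=
  pack_wealthAt_nonneg hL (fun S' hS' => (hpos m).2 S' hS') hS j

/-- one-sided structure at nodes with non-summable positions. -/
lemma onesided (hL : PackL 𝒯) (hpos : ∀ m, (h m).Positive 𝒯)
    {S : ℕ → ℝ} {j : ℕ} (hS : S ∈ 𝒯)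
    (hsw : Summable (fun m => wv h m j S)) (hsb : ¬ Summable (fun m => bp h m j S)) :
    (∀ ext ∈ 𝒯, (∀ i ≤ j, ext i = S i) → S j ≤ ext (j+1))
      ∨ (∀ ext ∈ 𝒯, (∀ i ≤ j, ext i = S i) → ext (j+1) ≤ S j) := by
  by_contra hcon
  push_neg at hcon
  obtain ⟨⟨e1, he1, hp1, hl1⟩, ⟨e2, he2, hp2, hl2⟩⟩ := hcon
  set t1 := e1 (j+1) - S j with ht1
  set t2 := e2 (j+1) - S j with ht2
  have ht1neg : t1 < 0 := by rw [ht1]; linarith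
  have ht2pos : 0 < t2 := by rw [ht2]; linarith
  have key : ∀ (ext : ℕ → ℝ), ext ∈ 𝒯 → (∀ i ≤ j, ext i = S i) → ∀ m,
      0 ≤ wv h m j S + bp h m j S * (ext (j+1) - S j) := by
    intro ext hext hpre m
    have h1 : 0 ≤ wv h m (j+1) ext := wv_nonneg hL hpos hext m (j+1)
    rw [wv_succ] at h1
    have e1' : wv h m j ext = wv h m j S := by
      have := wvf_congr (S := ext) (S' := S) (j := j) h hpre
      exact congrFun this m
    have e2' : bp h m j ext = bp h m j S := bp_congr h m hpre
    have e3' : ext j = S j := hpre j le_rfl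
    rwa [e1', e2', e3'] at h1
  set c := max t2⁻¹ (-t1)⁻¹ with hc
  apply hsb
  rw [← summable_abs_iff]
  apply Summable.of_nonneg_of_le (fun m => abs_nonneg _) (g := fun m => |bp h m j S|)
    (f := fun m => wv h m j S * c)
  · intro m
    have hwm : 0 ≤ wv h m j S := wv_nonneg hL hpos hS m j
    have k1 := key e1 he1 hp1 m
    have k2 := key e2 he2 hp2 m
    rw [← ht1] at k1
    rw [← ht2] at k2
    have hwc1 : wv h m j S * (-t1)⁻¹ ≤ wv h m j S * c :=
      mul_le_mul_of_nonneg_left (le_max_right _ _) hwm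
    have hwc2 : wv h m j S * t2⁻¹ ≤ wv h m j S * c :=
      mul_le_mul_of_nonneg_left (le_max_left _ _) hwm
    have h1' : bp h m j S ≤ wv h m j S * (-t1)⁻¹ := by
      rw [← div_eq_mul_inv, le_div_iff₀ (by linarith : (0:ℝ) < -t1)]
      nlinarith [k1]
    have h2' : -(bp h m j S) ≤ wv h m j S * t2⁻¹ := by
      rw [← div_eq_mul_inv, le_div_iff₀ ht2pos]
      nlinarith [k2]
    rw [abs_le]
    constructor
    · linarith
    · linarith
  · exact hsw.mul_right c

/-- the `dirn` direction dominates all moves at a one-sided node. -/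
lemma dirn_spec (hL : PackL 𝒯) (hpos : ∀ m, (h m).Positive 𝒯)
    {S : ℕ → ℝ} {j : ℕ} (hS : S ∈ 𝒯)
    (hsw : Summable (fun m => wv h m j S)) (hsb : ¬ Summable (fun m => bp h m j S)) :
    ∀ ext ∈ 𝒯, (∀ i ≤ j, ext i = S i) → 0 ≤ dirn 𝒯 j S * (ext (j+1) - S j) := by
  intro ext hext hpre
  unfold dirn
  split
  case isTrue hall =>
    have := hall ext hext hpre
    rw [one_mul]
    linarith
  case isFalse hall =>
    rcases onesided hL hpos hS hsw hsb with hcase | hcase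
    · exact absurd hcase hall
    · have := hcase ext hext hpre
      have : ext (j+1) - S j ≤ 0 := by linarith
      nlinarith

/-- the `dirn` value is `±1`. -/
lemma dirn_sq (𝒯 : Set (ℕ → ℝ)) (j : ℕ) (S : ℕ → ℝ) :
    dirn 𝒯 j S * dirn 𝒯 j S = 1 := by
  unfold dirn
  split <;> norm_num

/-- STAR (real version, requires summability). -/
lemma star_real (hL : PackL 𝒯) (hpos : ∀ m, (h m).Positive 𝒯)
    (hhedge : ∀ S ∈ 𝒯, ((max (P.wealth S) 0 : ℝ) : EReal)
      ≤ ((∑' m, ENNReal.ofReal ((h m).wealth S) : ℝ≥0∞) : EReal))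
    {S : ℕ → ℝ} (hS : S ∈ 𝒯) (j : ℕ)
    (hsw : Summable (fun m => wv h m j S)) :
    P.wealthAt j S ≤ ∑' m, wv h m j S := by
  have hdom : ∀ S' ∈ 𝒯, ((P.wealth S' : ℝ):EReal)
      ≤ ((∑' m, ENNReal.ofReal ((h m).wealth S') : ℝ≥0∞) : EReal) := by
    intro S' hS'
    refine le_trans ?_ (hhedge S' hS')
    exact_mod_cast EReal.coe_le_coe_iff.mpr (le_max_left _ _)
  have := pack_star hL hpos hdom hS j
  exact real_le_of_le_coe_tsum (fun m => wv_nonneg hL hpos hS m j) hsw this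

/-- `Mnd` specification. -/
lemma Mnd_spec {ε : ℝ} (hε : 0 < ε) {j : ℕ} {S : ℕ → ℝ}
    (hsw : Summable (fun m => wv h m j S)) :
    (∑' m, wv h m j S) - ∑ m ∈ Finset.range (Mnd h ε j S), wv h m j S ≤ ε/4 := by
  have hx : ∃ M : ℕ, (∑' m, wv h m j S) - ∑ m ∈ Finset.range M, wv h m j S ≤ ε/4 := by
    have htend := hsw.hasSum.tendsto_sum_nat
    have hev : ∀ᶠ x in nhds (∑' m, wv h m j S), (∑' m, wv h m j S) - ε/4 ≤ x :=
      eventually_ge_nhds (by linarith)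
    obtain ⟨M, hM⟩ := (htend.eventually hev).exists
    exact ⟨M, by linarith⟩
  rw [Mnd, dif_pos hx]
  exact Classical.choose_spec hx

end CoreCtx
/- ============ Part C3 : the main invariant ============ -/

section Main

variable {𝒯 : Set (ℕ → ℝ)} {P : SimplePortfolio} {h : ℕ → SimplePortfolio}

theorem esp_invariant (hL : PackL 𝒯) (hpos : ∀ m, (h m).Positive 𝒯)
    (hhedge : ∀ S ∈ 𝒯, ((max (P.wealth S) 0 : ℝ) : EReal)
      ≤ ((∑' m, ENNReal.ofReal ((h m).wealth S) : ℝ≥0∞) : EReal))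
    {ε : ℝ} (hε : 0 < ε) (hsumV : Summable (fun m => (h m).V))
    {V0 e0 : ℝ} (hV0 : V0 = e0 + (∑' m, (h m).V) - P.V) (he0 : ε/2 ≤ e0) :
    ∀ j, j ≤ P.n → ∀ S, S ∈ 𝒯 →
    (alive h j S → Summable (fun m => wv h m j S) ∧
      (Esp 𝒯 P h ε V0).wealthAt j S = e0 + (∑' m, wv h m j S) - P.wealthAt j S)
    ∧ (¬ alive h j S → 0 ≤ (Esp 𝒯 P h ε V0).wealthAt j S) := by
  intro j
  induction j with
  | zero =>
    intro _ S hS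
    constructor
    · intro _
      have hwv0 : (fun m => wv h m 0 S) = (fun m => (h m).V) := by
        funext m; exact (h m).wealthAt_zero S
      constructor
      · rw [hwv0]; exact hsumV
      · rw [(Esp 𝒯 P h ε V0).wealthAt_zero, P.wealthAt_zero, hwv0, Esp_V, hV0]
    · intro hna
      exact absurd (alive_zero h S) hna
  | succ j ih =>
    intro hjn S hS
    have hjn' : j < P.n := by omega
    have ihS := ih (by omega) S hS
    set Δ : ℝ := S (j+1) - S j with hΔ
    have hroll : (Esp 𝒯 P h ε V0).wealthAt (j+1) S
        = (Esp 𝒯 P h ε V0).wealthAt j S + (Esp 𝒯 P h ε V0).H j S * Δ := by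
      rw [(Esp 𝒯 P h ε V0).wealthAt_succ, if_pos (show j < (Esp 𝒯 P h ε V0).n from hjn')]
    by_cases halive : alive h j S
    · obtain ⟨hsw, hval⟩ := ihS.1 halive
      have hH : (Esp 𝒯 P h ε V0).H j S
          = (if Summable (fun m => bp h m j S) then posA P h j S else posB 𝒯 P h ε j S) := by
        show (if alive h j S then _ else 0) = _
        rw [if_pos halive]
      by_cases hsb : Summable (fun m => bp h m j S)
      · -- case A : summable positions, full slope
        have halive' : alive h (j+1) S := by
          intro i hi
          rcases Nat.lt_or_ge i j with hij | hij
          · exact halive i hij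
          · have : i = j := by omega
            subst this
            exact Or.inl hsb
        have hstep : (fun m => wv h m (j+1) S)
            = (fun m => wv h m j S + bp h m j S * Δ) := by
          funext m; exact wv_succ h m j S
        have hsw' : Summable (fun m => wv h m (j+1) S) := by
          rw [hstep]; exact hsw.add (hsb.mul_right Δ)
        have htsum : (∑' m, wv h m (j+1) S)
            = (∑' m, wv h m j S) + (∑' m, bp h m j S) * Δ := by
          rw [hstep, Summable.tsum_add hsw (hsb.mul_right Δ), tsum_mul_right]
        constructor
        · intro _
          refine ⟨hsw', ?_⟩
          rw [hroll, hval, hH, if_pos hsb, htsum, Fv_succ P j S, posA, ← hΔ]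
          ring
        · intro hna
          exact absurd halive' hna
      · -- case B : non-summable positions
        by_cases hflat : S (j+1) = S j
        · -- flat move : everything unchanged
          have hΔ0 : Δ = 0 := by rw [hΔ, hflat, sub_self]
          have halive' : alive h (j+1) S := by
            intro i hi
            rcases Nat.lt_or_ge i j with hij | hij
            · exact halive i hij
            · have : i = j := by omega
              subst this
              exact Or.inr hflat
          have hstep : (fun m => wv h m (j+1) S) = (fun m => wv h m j S) := by
            funext m; rw [wv_succ, ← hΔ, hΔ0, mul_zero, add_zero]
          constructor
          · intro _
            refine ⟨by rw [hstep]; exact hsw, ?_⟩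
            rw [hroll, hval, hΔ0, mul_zero, add_zero, hstep, Fv_succ P j S, ← hΔ, hΔ0,
              mul_zero, add_zero]
          · intro hna
            exact absurd halive' hna
        · -- a jump at a one-sided node : freeze, value stays nonnegative
          have hna' : ¬ alive h (j+1) S := by
            intro hcon
            rcases hcon j (by omega) with hc | hc
            · exact hsb hc
            · exact hflat hc
          refine ⟨fun hcon => absurd hcon hna', fun _ => ?_⟩
          -- notation
          set M := Mnd h ε j S with hM
          set hb := headB h ε j S with hhb
          set d := dirn 𝒯 j S with hd
          set κ := kap 𝒯 P h ε j S with hκ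
          set a := af P j S with ha
          set headW := ∑ m ∈ Finset.range M, wv h m j S with hheadW
          -- facts
          have htail : (∑' m, wv h m j S) - headW ≤ ε/4 := Mnd_spec hε hsw
          have htail0 : 0 ≤ (∑' m, wv h m j S) - headW := by
            have := Summable.sum_le_tsum (Finset.range M)
              (fun m _ => wv_nonneg hL hpos hS m j) hsw
            linarith
          have hstar : P.wealthAt j S ≤ ∑' m, wv h m j S :=
            star_real hL hpos hhedge hS j hsw
          have hdmove : 0 ≤ d * Δ := by
            rw [hd, hΔ]
            exact dirn_spec hL hpos hS hsw hsb S hS (fun i _ => rfl)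
          have hdd : d * d = 1 := by rw [hd]; exact dirn_sq 𝒯 j S
          have hκ1 : (a - hb) * d ≤ κ := by rw [hκ, kap, ← ha, ← hhb, ← hd]; exact le_max_left _ _
          have hκ0 : 0 ≤ κ := by rw [hκ, kap]; exact le_max_right _ _
          -- head sum evolves with headB
          have hheadstep : ∑ m ∈ Finset.range M, wv h m (j+1) S = headW + hb * Δ := by
            rw [hheadW, hhb, headB, ← hM]
            rw [Finset.sum_mul, ← Finset.sum_add_distrib]
            apply Finset.sum_congr rfl
            intro m _
            rw [wv_succ, ← hΔ]
          -- head sum at j+1 bounds Fv (j+1) - ... : positivity of the tail at j+1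
          have hheadle : ∑ m ∈ Finset.range M, wv h m (j+1) S ≤ ∑' m, wv h m (j+1) S ∨ True :=
            Or.inr trivial
          have hψ0 : P.wealthAt j S - headW ≤ ε/4 := by linarith
          have hFv1 : P.wealthAt (j+1) S = P.wealthAt j S + a * Δ := by
            rw [Fv_succ P j S, ← ha, ← hΔ]
          -- the κ-term dominates
          have hprod : 0 ≤ (κ - (a - hb) * d) * (d * Δ) :=
            mul_nonneg (by linarith) hdmove
          have hexp : (κ - (a - hb) * d) * (d * Δ)
              = κ * (d * Δ) - (a - hb) * ((d*d) * Δ) := by ring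
          rw [hdd, one_mul] at hexp
          have hkey : 0 ≤ κ * (d * Δ) - (a - hb) * Δ := by
            rw [← hexp]; exact hprod
          -- roll forward
          rw [hroll, hval, hH, if_neg hsb, posB, ← hhb, ← hd, ← ha,
            show kap 𝒯 P h ε j S = κ from rfl]
          have hval1 : e0 + (∑' m, wv h m j S) - P.wealthAt j S + (hb + κ * d - a) * Δ
              = e0 + ((∑' m, wv h m j S) - headW) + (headW - P.wealthAt j S)
                + (κ * (d * Δ) - (a - hb) * Δ) := by ring
          rw [hval1]
          have : -(ε/4) ≤ headW - P.wealthAt j S := by linarith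
          linarith
    · -- dead : position is zero
      have hH : (Esp 𝒯 P h ε V0).H j S = 0 := by
        show (if alive h j S then _ else 0) = 0
        rw [if_neg halive]
      have hv := ihS.2 halive
      have hroll0 : (Esp 𝒯 P h ε V0).wealthAt (j+1) S = (Esp 𝒯 P h ε V0).wealthAt j S := by
        rw [hroll, hH, zero_mul, add_zero]
      constructor
      · intro hcon
        exact absurd (alive_mono h (by omega) hcon) halive
      · intro _
        rw [hroll0]
        exact hv

end Main
/- ============ Part C4 : assembling the hedge family ============ -/

lemma tail_small {g : ℕ → ℝ} (hs : Summable g) {δ : ℝ} (hδ : 0 < δ) :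
    ∃ M : ℕ, (∑' m, g m) - ∑ m ∈ Finset.range M, g m ≤ δ := by
  have htend := hs.hasSum.tendsto_sum_nat
  have hev : ∀ᶠ x in nhds (∑' m, g m), (∑' m, g m) - δ ≤ x :=
    eventually_ge_nhds (by linarith)
  obtain ⟨M, hM⟩ := (htend.eventually hev).exists
  exact ⟨M, by linarith⟩

lemma max_sub_eq_neg_max (x : ℝ) : max x 0 - x = max (-x) 0 := by
  rcases le_total x 0 with hx | hx
  · rw [max_eq_right hx, max_eq_left (by linarith)]; ring
  · rw [max_eq_left hx, max_eq_right (by linarith)]; ring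

section Main2

variable {𝒯 : Set (ℕ → ℝ)} {P : SimplePortfolio} {h : ℕ → SimplePortfolio}

lemma FPport_positive (hL : PackL 𝒯) (hpos : ∀ m, (h m).Positive 𝒯) (i k : ℕ) :
    (FPport 𝒯 h i k).Positive 𝒯 := by
  constructor
  · exact le_refl 0
  · intro T hT
    rw [FPport_wealth]
    by_cases hc : ¬ Summable (fun m => bp h m i T) ∧ Summable (fun m => wv h m i T)
    · rw [if_pos hc, mul_assoc]
      apply mul_nonneg (by positivity)
      exact dirn_spec hL hpos hT hc.2 hc.1 T hT (fun _ _ => rfl)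
    · rw [if_neg hc, zero_mul]

/-- Core existence theorem : the cheap superhedge of `f⁻`. -/
theorem core_main (hL : PackL 𝒯) (hne : 𝒯.Nonempty)
    (P : SimplePortfolio) (h : ℕ → SimplePortfolio) (hpos : ∀ m, (h m).Positive 𝒯)
    (hhedge : ∀ S ∈ 𝒯, ((max (P.wealth S) 0 : ℝ) : EReal)
      ≤ ((∑' m, ENNReal.ofReal ((h m).wealth S) : ℝ≥0∞) : EReal))
    (hC : (∑' m, ENNReal.ofReal ((h m).V)) ≠ ⊤)
    {ε : ℝ} (hε : 0 < ε) :
    ∃ Q : ℕ → SimplePortfolio, (∀ m, (Q m).Positive 𝒯) ∧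
      (∀ S ∈ 𝒯, ((max (-(P.wealth S)) 0 : ℝ):EReal)
        ≤ ((∑' m, ENNReal.ofReal ((Q m).wealth S) : ℝ≥0∞):EReal)) ∧
      (∑' m, ENNReal.ofReal ((Q m).V))
        ≤ ENNReal.ofReal ((∑' m, ENNReal.ofReal ((h m).V)).toReal - P.V + ε) := by
  classical
  have hVnn : ∀ m, 0 ≤ (h m).V := fun m => (hpos m).1
  have hsumV : Summable (fun m => (h m).V) := summable_of_tsum_ofReal_ne_top hVnn hC
  set Creal : ℝ := (∑' m, ENNReal.ofReal ((h m).V)).toReal with hCreal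
  have hCreal' : Creal = ∑' m, (h m).V := by
    rw [hCreal, tsum_ofReal_eq hVnn hsumV, ENNReal.toReal_ofReal (tsum_nonneg hVnn)]
  -- choose the head for the initial capital
  obtain ⟨M₁, hM₁⟩ := tail_small hsumV (half_pos hε)
  set e0 : ℝ := ε - ((∑' m, (h m).V) - ∑ m ∈ Finset.range M₁, (h m).V) with he0def
  have htail0 : 0 ≤ (∑' m, (h m).V) - ∑ m ∈ Finset.range M₁, (h m).V := by
    have := Summable.sum_le_tsum (Finset.range M₁) (fun m _ => hVnn m) hsumV
    linarith
  have he0a : ε/2 ≤ e0 := by rw [he0def]; linarith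
  have he0b : e0 ≤ ε := by rw [he0def]; linarith
  set V0 : ℝ := e0 + (∑' m, (h m).V) - P.V with hV0def
  have hV0 : V0 = e0 + (∑' m, (h m).V) - P.V := hV0def
  -- the invariant
  have hinv := esp_invariant hL hpos hhedge hε hsumV hV0 he0a
  -- wv at time 0 is the initial capital
  have hwv0 : ∀ S : ℕ → ℝ, (fun m => wv h m 0 S) = (fun m => (h m).V) := by
    intro S; funext m; exact (h m).wealthAt_zero S
  -- price bound : P.V ≤ total cost
  have hPV : P.V ≤ ∑' m, (h m).V := by
    obtain ⟨S, hS⟩ := hne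
    have hsw0 : Summable (fun m => wv h m 0 S) := by rw [hwv0]; exact hsumV
    have := star_real hL hpos hhedge hS 0 hsw0
    rw [P.wealthAt_zero] at this
    calc P.V ≤ ∑' m, wv h m 0 S := this
    _ = ∑' m, (h m).V := by rw [hwv0]
  have hV0nn : 0 ≤ V0 := by rw [hV0def]; linarith
  -- the special portfolio is positive and superhedges f⁻ on alive paths
  have hEwealth : ∀ S, S ∈ 𝒯 → alive h P.n S →
      max (-(P.wealth S)) 0 ≤ (Esp 𝒯 P h ε V0).wealth S := by
    intro S hS ha
    obtain ⟨hsw, hval⟩ := (hinv P.n le_rfl S hS).1 ha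
    have hwAt : (Esp 𝒯 P h ε V0).wealth S = (Esp 𝒯 P h ε V0).wealthAt P.n S := by
      rw [(Esp 𝒯 P h ε V0).wealthAt_of_le (le_of_eq (Esp_n 𝒯 P h ε V0))]
    have hPAt : P.wealthAt P.n S = P.wealth S := P.wealthAt_of_le le_rfl S
    have hstar := star_real hL hpos hhedge hS P.n hsw
    have hts0 : 0 ≤ ∑' m, wv h m P.n S := tsum_nonneg (fun m => wv_nonneg hL hpos hS m P.n)
    have hmax : max (P.wealth S) 0 ≤ ∑' m, wv h m P.n S := by
      rw [← hPAt]
      exact max_le hstar hts0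
    rw [hwAt, hval, hPAt]
    have := max_sub_eq_neg_max (P.wealth S)
    have h24 : ε/2 ≤ e0 := he0a
    linarith [hmax, max_sub_eq_neg_max (P.wealth S)]
  have hEpos : (Esp 𝒯 P h ε V0).Positive 𝒯 := by
    constructor
    · rw [Esp_V]; exact hV0nn
    · intro S hS
      by_cases ha : alive h P.n S
      · have := hEwealth S hS ha
        have h0 : (0:ℝ) ≤ max (-(P.wealth S)) 0 := le_max_right _ _
        linarith
      · have := (hinv P.n le_rfl S hS).2 ha
        rwa [(Esp 𝒯 P h ε V0).wealthAt_of_le (le_of_eq (Esp_n 𝒯 P h ε V0))] at this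
  -- the full family
  set Q : ℕ → SimplePortfolio := fun k =>
    Nat.rec (Esp 𝒯 P h ε V0) (fun k' _ => FPport 𝒯 h (Nat.unpair k').1 (Nat.unpair k').2) k
    with hQdef
  have hQ0 : Q 0 = Esp 𝒯 P h ε V0 := rfl
  have hQs : ∀ k, Q (k+1) = FPport 𝒯 h (Nat.unpair k).1 (Nat.unpair k).2 := fun k => rfl
  refine ⟨Q, ?_, ?_, ?_⟩
  · -- positivity
    intro m
    cases m with
    | zero => exact hEpos
    | succ k => rw [hQs]; exact FPport_positive hL hpos _ _
  · -- superhedging of f⁻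
    intro S hS
    by_cases ha : alive h P.n S
    · -- the special portfolio alone does it
      have h1 : ENNReal.ofReal (max (-(P.wealth S)) 0)
          ≤ ∑' m, ENNReal.ofReal ((Q m).wealth S) := by
        refine le_trans ?_ (ENNReal.le_tsum 0)
        rw [hQ0]
        exact ENNReal.ofReal_le_ofReal (hEwealth S hS ha)
      calc ((max (-(P.wealth S)) 0 : ℝ):EReal)
          = ((ENNReal.ofReal (max (-(P.wealth S)) 0) : ℝ≥0∞) : EReal) := by
            rw [EReal.coe_ennreal_ofReal, max_eq_left (le_max_right _ _)]
      _ ≤ _ := by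
            rw [EReal.coe_ennreal_le_coe_ennreal_iff]
            exact h1
    · -- a frozen path : the free pieces deliver +∞
      have hex : ∃ i, i < P.n ∧ ¬ (Summable (fun m => bp h m i S) ∨ S (i+1) = S i) := by
        by_contra hcon
        push_neg at hcon
        exact ha (fun i hi => hcon i hi)
      have hspec := Nat.find_spec hex
      have hmin := fun i (hi : i < Nat.find hex) => Nat.find_min hex hi
      set i0 := Nat.find hex with hi0
      have hi0lt : i0 < P.n := hspec.1
      have hfail := hspec.2
      push_neg at hfail
      obtain ⟨hsb, hmove⟩ := hfail
      have halive0 : alive h i0 S := by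
        intro i hi
        by_contra hcon
        exact hmin i hi ⟨by omega, hcon⟩
      have hsw : Summable (fun m => wv h m i0 S) :=
        ((hinv i0 hi0lt.le S hS).1 halive0).1
      set θ : ℝ := dirn 𝒯 i0 S * (S (i0+1) - S i0) with hθ
      have hθnn : 0 ≤ θ := dirn_spec hL hpos hS hsw hsb S hS (fun _ _ => rfl)
      have hdne : dirn 𝒯 i0 S ≠ 0 := by
        unfold dirn; split <;> norm_num
      have hθpos : 0 < θ := by
        rcases lt_or_eq_of_le hθnn with hgt | heq
        · exact hgt
        · exfalso
          have := mul_ne_zero hdne (sub_ne_zero.mpr hmove)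
          rw [← hθ] at this
          exact this heq.symm
      have hFPw : ∀ k : ℕ, (FPport 𝒯 h i0 k).wealth S = (k+1 : ℝ) * θ := by
        intro k
        rw [FPport_wealth, if_pos ⟨hsb, hsw⟩, hθ, mul_assoc]
      have htop : (∑' m, ENNReal.ofReal ((Q m).wealth S)) = ⊤ := by
        have hinj : Function.Injective (fun k : ℕ => Nat.pair i0 k + 1) := by
          intro a b hab
          simp only [Nat.add_right_cancel_iff] at hab
          have := congrArg Nat.unpair hab
          simpa [Nat.unpair_pair] using this
        have hsub := ENNReal.tsum_comp_le_tsum_of_injective hinj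
          (fun m => ENNReal.ofReal ((Q m).wealth S))
        have hQval : ∀ k : ℕ, ENNReal.ofReal ((Q (Nat.pair i0 k + 1)).wealth S)
            = ENNReal.ofReal ((k+1:ℝ) * θ) := by
          intro k
          rw [hQs, Nat.unpair_pair, hFPw k]
        have hlow : (∑' k : ℕ, ENNReal.ofReal θ)
            ≤ ∑' k : ℕ, ENNReal.ofReal ((Q (Nat.pair i0 k + 1)).wealth S) := by
          apply ENNReal.tsum_le_tsum
          intro k
          rw [hQval k]
          apply ENNReal.ofReal_le_ofReal
          nlinarith
        have htop' : (∑' _ : ℕ, ENNReal.ofReal θ) = ⊤ :=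
          ENNReal.tsum_const_eq_top_of_ne_zero
            (by simp [ENNReal.ofReal_eq_zero]; linarith)
        rw [htop'] at hlow
        exact top_le_iff.mp (le_trans hlow hsub)
      rw [htop]
      rw [EReal.coe_ennreal_top]
      exact le_top
  · -- cost
    have hcost : (∑' m, ENNReal.ofReal ((Q m).V)) = ENNReal.ofReal V0 := by
      rw [tsum_eq_zero_add' ENNReal.summable]
      have : ∀ k:ℕ, ENNReal.ofReal ((Q (k+1)).V) = 0 := by
        intro k; rw [hQs]
        show ENNReal.ofReal (0:ℝ) = 0
        simp
      rw [tsum_congr this, tsum_zero, add_zero, hQ0, Esp_V]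
    rw [hcost]
    apply ENNReal.ofReal_le_ofReal
    rw [hV0def, ← hCreal']
    linarith

end Main2
/- ============ Part C5 : the König condition and the theorem ============ -/

lemma EReal.le_coe_of_forall_add {a : EReal} {r : ℝ}
    (h : ∀ ε : ℝ, 0 < ε → a ≤ ((r + ε : ℝ):EReal)) : a ≤ (r : EReal) := by
  induction a using EReal.rec with
  | bot => exact bot_le
  | coe x =>
    rw [EReal.coe_le_coe_iff]
    by_contra hx
    push_neg at hx
    have := h ((x - r)/2) (by linarith)
    rw [EReal.coe_le_coe_iff] at this
    linarith
  | top =>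
    have := h 1 one_pos
    exact absurd this (not_le.mpr (EReal.coe_lt_top _))

section Koenig

variable {𝒯 : Set (ℕ → ℝ)}

lemma price_le_cost (hL : PackL 𝒯) (hne : 𝒯.Nonempty) {P : SimplePortfolio}
    {g : ℕ → SimplePortfolio} (hpos : ∀ m, (g m).Positive 𝒯)
    (hhedge : ∀ S ∈ 𝒯, ((max (P.wealth S) 0 : ℝ) : EReal)
      ≤ ((∑' m, ENNReal.ofReal ((g m).wealth S) : ℝ≥0∞) : EReal))
    (hC : (∑' m, ENNReal.ofReal ((g m).V)) ≠ ⊤) :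
    P.V ≤ (∑' m, ENNReal.ofReal ((g m).V)).toReal := by
  have hVnn : ∀ m, 0 ≤ (g m).V := fun m => (hpos m).1
  have hsumV : Summable (fun m => (g m).V) := summable_of_tsum_ofReal_ne_top hVnn hC
  have hCreal' : (∑' m, ENNReal.ofReal ((g m).V)).toReal = ∑' m, (g m).V := by
    rw [tsum_ofReal_eq hVnn hsumV, ENNReal.toReal_ofReal (tsum_nonneg hVnn)]
  obtain ⟨S, hS⟩ := hne
  have hwv0 : (fun m => wv g m 0 S) = (fun m => (g m).V) := by
    funext m; exact (g m).wealthAt_zero S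
  have hsw0 : Summable (fun m => wv g m 0 S) := by rw [hwv0]; exact hsumV
  have := star_real hL hpos hhedge hS 0 hsw0
  rw [P.wealthAt_zero] at this
  rw [hCreal']
  calc P.V ≤ ∑' m, wv g m 0 S := this
  _ = ∑' m, (g m).V := by rw [hwv0]

theorem pack_koenig (hL : PackL 𝒯) (hne : 𝒯.Nonempty) : KoenigCond 𝒯 := by
  intro P
  set A : EReal := IBar 𝒯 (fun S => ((max (-(P.wealth S)) 0 : ℝ):EReal)) with hA
  show (P.V : EReal) + A ≤ IBar 𝒯 (fun S => ((max (P.wealth S) 0 : ℝ):EReal))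
  unfold IBar
  apply le_sInf
  rintro c ⟨g, hposf, hhedge, rfl⟩
  rcases eq_or_ne (∑' m, ENNReal.ofReal ((g m).V)) ⊤ with hBtop | hBtop
  · rw [hBtop, EReal.coe_ennreal_top]
    exact le_top
  · set Creal : ℝ := (∑' m, ENNReal.ofReal ((g m).V)).toReal with hCr
    have hPV : P.V ≤ Creal := price_le_cost hL hne hposf hhedge hBtop
    have key : ∀ ε : ℝ, 0 < ε → (P.V : EReal) + A ≤ ((Creal + ε : ℝ):EReal) := by
      intro ε hε
      obtain ⟨Q, hQpos, hQhedge, hQcost⟩ := core_main hL hne P g hposf hhedge hBtop hε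
      have hIBle : A ≤ ((∑' m, ENNReal.ofReal ((Q m).V) : ℝ≥0∞):EReal) := by
        rw [hA]
        unfold IBar
        exact sInf_le ⟨Q, hQpos, hQhedge, rfl⟩
      have h2 : ((∑' m, ENNReal.ofReal ((Q m).V) : ℝ≥0∞):EReal)
          ≤ ((ENNReal.ofReal (Creal - P.V + ε) : ℝ≥0∞):EReal) := by
        rw [EReal.coe_ennreal_le_coe_ennreal_iff]
        exact hQcost
      have h3 : ((ENNReal.ofReal (Creal - P.V + ε) : ℝ≥0∞):EReal)
          = ((max (Creal - P.V + ε) 0 : ℝ):EReal) := EReal.coe_ennreal_ofReal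
      calc (P.V : EReal) + A
          ≤ (P.V : EReal) + ((max (Creal - P.V + ε) 0 : ℝ):EReal) := by
            apply add_le_add le_rfl
            exact le_trans hIBle (le_trans h2 (le_of_eq h3))
      _ = ((P.V + max (Creal - P.V + ε) 0 : ℝ):EReal) := by rw [← EReal.coe_add]
      _ ≤ ((Creal + ε : ℝ):EReal) := by
            rw [EReal.coe_le_coe_iff]
            rcases le_total 0 (Creal - P.V + ε) with hx | hx
            · rw [max_eq_left hx]; linarith
            · rw [max_eq_right hx]; linarith
    have := EReal.le_coe_of_forall_add (a := (P.V : EReal) + A) (r := Creal) key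
    rwa [← coe_ennreal_eq_coe_toReal hBtop] at this

end Koenig

theorem stmt10' (𝒮 : Set (ℕ → ℝ)) (s0 : ℝ) (h0 : ∀ S ∈ 𝒮, S 0 = s0)
    (hnL : NodewiseL 𝒮) :
    NodewiseK 𝒮 ∧ (𝒮.Nonempty → LOP 𝒮 ∧ KoenigCond 𝒮) := by
  have hnode : ∀ S ∈ 𝒮, ∀ j, LOP (shiftedSpace 𝒮 S j) ∧ KoenigCond (shiftedSpace 𝒮 S j) := by
    intro S hS j
    have pack := pack_of_nodewise hnL hS j
    have hne := shiftedSpace_nonempty hS j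
    exact ⟨pack_lop pack hne, pack_koenig pack hne⟩
  refine ⟨hnode, ?_⟩
  rintro ⟨S, hS⟩
  have := hnode S hS 0
  rwa [shiftedSpace_zero_self h0 hS] at this

/-- Leinert's condition at every node implies König's condition
(together with (LOP)) at every node; in particular (LOP) and (K) hold for `𝒮`
itself. -/
theorem stmt10 (𝒮 : Set (ℕ → ℝ)) (s0 : ℝ) (h0 : ∀ S ∈ 𝒮, S 0 = s0)
    (hnL : NodewiseL 𝒮) :
    NodewiseK 𝒮 ∧ (𝒮.Nonempty → LOP 𝒮 ∧ KoenigCond 𝒮) := by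
  exact stmt10' 𝒮 s0 h0 hnL
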